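/- arXiv:1703.03224 — 2 statements merged into one kernel-verified Lean document; each statement's English description precedes it below -/
import Mathlib

section
/- The restriction b_{n,k}^I(x) := b_{n,k}(x,0) admits the expansion b_{n,k}^I(x) = Σ_{i=0}^{n−k} ((k−n)_i (−n−k−1)_i / (i!)²) x^{n−i}(x−1)^i, and the coefficient of x^{k}(x−1)^{n−k} (the term i = n−k) equals (2k+2)_{n−k}/(n−k)!, which is nonzero. -/
open Polynomial

/-- The Legendre polynomials, via the classical three-term recursion. -/
noncomputable def legendreR : ℕ → ℝ[X]
  | 0 => 1
  | 1 => X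
  | (k + 2) =>
      C ((2 * (k : ℝ) + 3) / ((k : ℝ) + 2)) * (X * legendreR (k + 1))
        - C (((k : ℝ) + 1) / ((k : ℝ) + 2)) * legendreR k

/-- Homogenization of the Legendre polynomial: `u ^ k * P_k (v / u)` as a polynomial
expression in `(u, v)`. -/
noncomputable def homLeg (k : ℕ) (u v : ℝ) : ℝ :=
  ∑ j ∈ Finset.range (k + 1), (legendreR k).coeff j * v ^ j * u ^ (k - j)

/-- The Jacobi polynomial `P_m^{(0,β)}` via its terminating hypergeometric expansion. -/
noncomputable def jacobi0 (m : ℕ) (β x : ℝ) : ℝ :=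
  ∑ j ∈ Finset.range (m + 1),
    ((ascPochhammer ℝ j).eval (-(m : ℝ)) * (ascPochhammer ℝ j).eval ((m : ℝ) + β + 1))
      / ((j.factorial : ℝ) ^ 2) * ((1 - x) / 2) ^ j

/-- The orthogonal polynomials `b_{n,k}` on the reference triangle. -/
noncomputable def bnk (n k : ℕ) (x₁ x₂ : ℝ) : ℝ :=
  jacobi0 (n - k) (2 * (k : ℝ) + 1) (2 * (x₁ + x₂) - 1) * homLeg k (x₁ + x₂) (x₁ - x₂)

open Finset

lemma legendreR_aux (k : ℕ) :
    ((legendreR k).natDegree ≤ k ∧ (legendreR k).eval 1 = 1) ∧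
    ((legendreR (k+1)).natDegree ≤ k+1 ∧ (legendreR (k+1)).eval 1 = 1) := by
  induction k with
  | zero =>
    refine ⟨⟨?_, ?_⟩, ?_, ?_⟩ <;> simp [legendreR]
  | succ k ih =>
    obtain ⟨⟨h1, h2⟩, h3, h4⟩ := ih
    refine ⟨⟨h3, h4⟩, ?_, ?_⟩
    · show (legendreR (k+2)).natDegree ≤ k + 2
      rw [show legendreR (k+2) = C ((2 * (k : ℝ) + 3) / ((k : ℝ) + 2)) * (X * legendreR (k + 1))
        - C (((k : ℝ) + 1) / ((k : ℝ) + 2)) * legendreR k from rfl]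
      refine le_trans (natDegree_sub_le _ _) (max_le ?_ ?_)
      · refine le_trans (natDegree_mul_le) ?_
        simp only [natDegree_C, zero_add]
        refine le_trans (natDegree_mul_le) ?_
        have := natDegree_X_le (R := ℝ)
        omega
      · refine le_trans (natDegree_mul_le) ?_
        simp only [natDegree_C, zero_add]
        omega
    · show (legendreR (k+2)).eval 1 = 1
      rw [show legendreR (k+2) = C ((2 * (k : ℝ) + 3) / ((k : ℝ) + 2)) * (X * legendreR (k + 1))
        - C (((k : ℝ) + 1) / ((k : ℝ) + 2)) * legendreR k from rfl]
      have hk : (k : ℝ) + 2 ≠ 0 := by positivity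
      simp only [eval_sub, eval_mul, eval_C, eval_X, h2, h4, mul_one]
      field_simp
      ring

lemma homLeg_diag (k : ℕ) (x : ℝ) : homLeg k x x = x ^ k := by
  unfold homLeg
  have h1 : ∀ j ∈ range (k+1),
      (legendreR k).coeff j * x^j * x^(k-j) = (legendreR k).coeff j * x^k := by
    intro j hj; simp only [mem_range] at hj
    rw [mul_assoc, ← pow_add, show j + (k - j) = k from by omega]
  rw [Finset.sum_congr rfl h1, ← Finset.sum_mul]
  have hdeg : (legendreR k).natDegree < k + 1 := Nat.lt_succ_of_le (legendreR_aux k).1.1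
  have h2 : (legendreR k).eval 1 = ∑ j ∈ range (k+1), (legendreR k).coeff j := by
    rw [eval_eq_sum_range' hdeg]; simp
  rw [← h2, (legendreR_aux k).1.2, one_mul]

/-- generalized binomial coefficient -/
noncomputable def rch (a : ℝ) (i : ℕ) : ℝ := (descPochhammer ℝ i).eval a / i.factorial

lemma rch_zero (a : ℝ) : rch a 0 = 1 := by simp [rch, descPochhammer_zero]

lemma rch_pascal (x : ℝ) (s : ℕ) : rch (x + 1) (s + 1) = rch x (s + 1) + rch x s := by
  have h1 : (descPochhammer ℝ (s+1)).eval (x+1) = (x+1) * (descPochhammer ℝ s).eval x := by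
    rw [descPochhammer_succ_left]; simp [eval_comp]
  have h2 : (descPochhammer ℝ (s+1)).eval x = (descPochhammer ℝ s).eval x * (x - s) := by
    rw [descPochhammer_succ_eval]
  have hs : ((s+1).factorial : ℝ) = (s+1) * s.factorial := by
    rw [Nat.factorial_succ]; push_cast; ring
  have hf : (s.factorial : ℝ) ≠ 0 := Nat.cast_ne_zero.mpr s.factorial_ne_zero
  have hf1 : ((s:ℝ)+1) ≠ 0 := by positivity
  rw [rch, rch, rch, h1, h2, hs]
  field_simp
  ring

lemma rch_vandermonde (j : ℕ) : ∀ (s : ℕ) (a : ℝ),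
    ∑ t ∈ range (s+1), (j.choose t : ℝ) * rch a (s - t) = rch (a + j) s := by
  induction j with
  | zero =>
    intro s a
    rw [Finset.sum_eq_single_of_mem 0 (by simp)]
    · simp [rch]
    · intro t _ ht
      simp [Nat.choose_eq_zero_of_lt (Nat.pos_of_ne_zero ht)]
  | succ j ih =>
    intro s a
    match s with
    | 0 => simp [rch_zero]
    | s + 1 =>
      have split : ∀ t ∈ range (s+1+1), ((j+1).choose t : ℝ) * rch a (s+1-t)
          = (j.choose t : ℝ) * rch a (s+1-t)
            + (((j+1).choose t : ℝ) - (j.choose t : ℝ)) * rch a (s+1-t) := by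
        intro t _; ring
      rw [Finset.sum_congr rfl split, Finset.sum_add_distrib, ih (s+1) a]
      have e2 : ∑ t ∈ range (s+1+1),
          (((j+1).choose t : ℝ) - (j.choose t : ℝ)) * rch a (s+1-t) = rch (a + j) s := by
        rw [Finset.sum_range_succ']
        have h1 : ∀ i ∈ range (s+1),
            (((j+1).choose (i+1) : ℝ) - (j.choose (i+1) : ℝ)) * rch a (s+1-(i+1))
              = (j.choose i : ℝ) * rch a (s - i) := by
          intro i _
          rw [Nat.choose_succ_succ, show s+1-(i+1) = s-i from by omega]
          push_cast; ring
        rw [Finset.sum_congr rfl h1, ih s a]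
        simp
      rw [e2, show a + ((j:ℕ)+1 : ℕ) = (a + (j:ℝ)) + 1 from by push_cast; ring]
      exact (rch_pascal (a + j) s).symm

lemma tri_swap (m : ℕ) (f : ℕ → ℕ → ℝ) :
    ∑ i ∈ range (m+1), ∑ l ∈ range (m - i + 1), f i l
      = ∑ j ∈ range (m+1), ∑ i ∈ range (j+1), f i (j - i) := by
  rw [Finset.sum_sigma', Finset.sum_sigma']
  refine Finset.sum_nbij' (fun p => ⟨p.1 + p.2, p.1⟩) (fun p => ⟨p.2, p.1 - p.2⟩) ?_ ?_ ?_ ?_ ?_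
  · intro p hp
    simp only [Finset.mem_sigma, Finset.mem_range] at *
    omega
  · intro p hp
    simp only [Finset.mem_sigma, Finset.mem_range] at *
    omega
  · intro p hp
    obtain ⟨a, b⟩ := p
    simp only [Finset.mem_sigma, Finset.mem_range] at hp
    simp
  · intro p hp
    obtain ⟨a, b⟩ := p
    simp only [Finset.mem_sigma, Finset.mem_range] at hp
    have h : b + (a - b) = a := by omega
    simp [h]
  · intro p hp
    obtain ⟨a, b⟩ := p
    simp only [Finset.mem_sigma, Finset.mem_range] at hp
    simp only [Nat.add_sub_cancel_left]

lemma coef_id (m : ℕ) (E : ℝ) {j : ℕ} (hj : j ≤ m)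
    (vdm : ∑ i ∈ range (j+1), (j.choose i : ℝ) * rch E i = rch (E + j) j) :
    ∑ i ∈ range (j+1),
      ((ascPochhammer ℝ i).eval (-(m:ℝ)) * (ascPochhammer ℝ i).eval (-E)) / ((i.factorial:ℝ))^2
        * (((m - i).choose (j - i)) : ℝ)
    = (-1)^j * (((ascPochhammer ℝ j).eval (-(m:ℝ)) * (ascPochhammer ℝ j).eval (E+1))
        / ((j.factorial:ℝ))^2) := by
  have hM : ∀ i : ℕ, i ≤ j → (descPochhammer ℝ j).eval (m:ℝ)
      = (descPochhammer ℝ i).eval (m:ℝ)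
        * ((((j-i).factorial :ℕ):ℝ) * (((m-i).choose (j-i)):ℝ)) := by
    intro i hi
    have h1 : (descPochhammer ℝ j).eval (m:ℝ)
        = (descPochhammer ℝ i).eval (m:ℝ) * (descPochhammer ℝ (j-i)).eval ((m:ℝ) - i) := by
      conv_lhs => rw [show j = i + (j - i) from by omega, ← descPochhammer_mul]
      simp [eval_comp]
    have h2 : ((m:ℝ) - (i:ℝ)) = ((m - i : ℕ) : ℝ) := by
      have : i ≤ m := by omega
      push_cast [this]; ring
    have h3 : (descPochhammer ℝ (j-i)).eval (((m - i : ℕ)):ℝ)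
        = (((j-i).factorial :ℕ):ℝ) * (((m-i).choose (j-i)):ℝ) := by
      rw [descPochhammer_eval_eq_descFactorial]
      exact_mod_cast congrArg (Nat.cast (R := ℝ))
        (Nat.descFactorial_eq_factorial_mul_choose (m-i) (j-i))
    rw [h1, h2, h3]
  have step : ∀ i ∈ range (j+1),
      ((ascPochhammer ℝ i).eval (-(m:ℝ)) * (ascPochhammer ℝ i).eval (-E)) / ((i.factorial:ℝ))^2
        * (((m - i).choose (j - i)) : ℝ)
      = (descPochhammer ℝ j).eval (m:ℝ) / (j.factorial:ℝ)
          * ((j.choose i : ℝ) * rch E i) := by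
    intro i hi
    simp only [mem_range] at hi
    have hi' : i ≤ j := by omega
    rw [ascPochhammer_eval_neg_eq_descPochhammer, ascPochhammer_eval_neg_eq_descPochhammer,
      hM i hi', rch]
    have f1 : (i.factorial : ℝ) ≠ 0 := Nat.cast_ne_zero.mpr i.factorial_ne_zero
    have f2 : ((j-i).factorial : ℝ) ≠ 0 := Nat.cast_ne_zero.mpr (j-i).factorial_ne_zero
    have hcj : (j.choose i : ℝ)
        = (j.factorial : ℝ) / ((i.factorial : ℝ) * ((j-i).factorial : ℝ)) := by
      rw [eq_div_iff (by positivity)]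
      have := congrArg (Nat.cast (R := ℝ)) (Nat.choose_mul_factorial_mul_factorial hi')
      push_cast at this
      linarith [this]
    have hsq : ((-1:ℝ)^i) * ((-1:ℝ)^i) = 1 := by
      rw [← pow_add, ← two_mul, pow_mul]; norm_num
    have hsgn : ((-1:ℝ)^i * (descPochhammer ℝ i).eval (m:ℝ))
        * ((-1:ℝ)^i * (descPochhammer ℝ i).eval E)
        = (descPochhammer ℝ i).eval (m:ℝ) * (descPochhammer ℝ i).eval E := by
      calc ((-1:ℝ)^i * (descPochhammer ℝ i).eval (m:ℝ))
            * ((-1:ℝ)^i * (descPochhammer ℝ i).eval E)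
          = (((-1:ℝ)^i) * ((-1:ℝ)^i))
            * ((descPochhammer ℝ i).eval (m:ℝ) * (descPochhammer ℝ i).eval E) := by ring
        _ = _ := by rw [hsq, one_mul]
    rw [hsgn, hcj]
    field_simp
  rw [Finset.sum_congr rfl step, ← Finset.mul_sum, vdm]
  have hE : rch (E + j) j = (ascPochhammer ℝ j).eval (E+1) / (j.factorial : ℝ) := by
    rw [rch, descPochhammer_eval_eq_ascPochhammer]
    norm_num
  rw [hE, ascPochhammer_eval_neg_eq_descPochhammer]
  have hsqj : ((-1:ℝ)^j) * ((-1:ℝ)^j) = 1 := by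
    rw [← pow_add, ← two_mul, pow_mul]; norm_num
  have key : ∀ D A F : ℝ, (-1:ℝ)^j * ((-1:ℝ)^j * D * A / F)
      = ((-1:ℝ)^j * ((-1:ℝ)^j)) * (D * A / F) := by intro D A F; ring
  rw [key, hsqj, one_mul, div_mul_div_comm, ← sq]

lemma vdm_diag (j : ℕ) (E : ℝ) :
    ∑ i ∈ range (j+1), (j.choose i : ℝ) * rch E i = rch (E + j) j := by
  have h2 := Finset.sum_range_reflect (fun t => (j.choose t : ℝ) * rch E (j - t)) (j+1)
  calc ∑ i ∈ range (j+1), (j.choose i : ℝ) * rch E i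
      = ∑ i ∈ range (j+1), (j.choose (j+1-1-i) : ℝ) * rch E (j - (j+1-1-i)) := by
        refine Finset.sum_congr rfl fun i hi => ?_
        simp only [mem_range] at hi
        rw [show j + 1 - 1 - i = j - i from by omega, Nat.choose_symm (by omega),
          show j - (j - i) = i from by omega]
    _ = ∑ t ∈ range (j+1), (j.choose t : ℝ) * rch E (j - t) := h2
    _ = rch (E + j) j := rch_vandermonde j j E

lemma central (m : ℕ) (E x : ℝ) :
    ∑ i ∈ range (m+1),
      ((ascPochhammer ℝ i).eval (-(m:ℝ)) * (ascPochhammer ℝ i).eval (-E)) / ((i.factorial:ℝ))^2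
        * x^(m-i) * (x-1)^i
    = ∑ j ∈ range (m+1),
      ((ascPochhammer ℝ j).eval (-(m:ℝ)) * (ascPochhammer ℝ j).eval (E+1)) / ((j.factorial:ℝ))^2
        * (1-x)^j := by
  set A : ℕ → ℝ := fun i =>
    ((ascPochhammer ℝ i).eval (-(m:ℝ)) * (ascPochhammer ℝ i).eval (-E)) / ((i.factorial:ℝ))^2
    with hA
  have expand : ∀ i ∈ range (m+1), A i * x^(m-i) * (x-1)^i
      = ∑ l ∈ range (m - i + 1), A i * (((m-i).choose l : ℕ):ℝ) * (x-1)^(i+l) := by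
    intro i _
    have hx : x^(m-i) = ∑ l ∈ range (m-i+1), (x-1)^l * (((m-i).choose l : ℕ):ℝ) := by
      have h := add_pow (x-1) 1 (m-i)
      simp only [one_pow, mul_one] at h
      rw [show x - 1 + 1 = x from by ring] at h
      exact h
    rw [hx, Finset.mul_sum, Finset.sum_mul]
    refine Finset.sum_congr rfl fun l _ => ?_
    rw [pow_add]; ring
  rw [Finset.sum_congr rfl expand,
    tri_swap m (fun i l => A i * (((m-i).choose l : ℕ):ℝ) * (x-1)^(i+l))]
  refine Finset.sum_congr rfl fun j hj => ?_
  simp only [mem_range] at hj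
  have hj' : j ≤ m := by omega
  have inner : ∀ i ∈ range (j+1), A i * (((m-i).choose (j-i) : ℕ):ℝ) * (x-1)^(i+(j-i))
      = (A i * (((m-i).choose (j-i) : ℕ):ℝ)) * (x-1)^j := by
    intro i hi; simp only [mem_range] at hi
    rw [show i + (j-i) = j from by omega, mul_assoc]
  rw [Finset.sum_congr rfl inner, ← Finset.sum_mul]
  have hc := coef_id m E hj' (vdm_diag j E)
  simp only [hA]
  rw [hc]
  have hneg : (1-x:ℝ)^j = (-1)^j * (x-1)^j := by
    rw [show (1-x:ℝ) = -(x-1) from by ring, neg_pow]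
  rw [hneg]
  ring

theorem bnk_edge_expansion (n k : ℕ) (hkn : k ≤ n) :
    (∀ x : ℝ, bnk n k x 0
        = ∑ i ∈ Finset.range (n - k + 1),
            ((ascPochhammer ℝ i).eval ((k : ℝ) - (n : ℝ))
                * (ascPochhammer ℝ i).eval (-(n : ℝ) - (k : ℝ) - 1)) / ((i.factorial : ℝ)) ^ 2
              * x ^ (n - i) * (x - 1) ^ i) ∧
    ((ascPochhammer ℝ (n - k)).eval ((k : ℝ) - (n : ℝ))
        * (ascPochhammer ℝ (n - k)).eval (-(n : ℝ) - (k : ℝ) - 1)) / (((n - k).factorial : ℝ)) ^ 2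
      = (ascPochhammer ℝ (n - k)).eval (2 * (k : ℝ) + 2) / ((n - k).factorial : ℝ) ∧
    (ascPochhammer ℝ (n - k)).eval (2 * (k : ℝ) + 2) / ((n - k).factorial : ℝ) ≠ 0 := by
  set m := n - k with hm
  have hcast : ((m : ℕ) : ℝ) = (n:ℝ) - (k:ℝ) := by
    rw [hm]; push_cast [hkn]; ring
  set E : ℝ := (n:ℝ) + (k:ℝ) + 1 with hE
  refine ⟨?_, ?_, ?_⟩
  · intro x
    have h1 : bnk n k x 0 = jacobi0 m (2*(k:ℝ)+1) (2*x-1) * homLeg k x x := by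
      simp only [bnk, add_zero, sub_zero, hm]
    rw [h1, homLeg_diag]
    have h2 : jacobi0 m (2*(k:ℝ)+1) (2*x-1)
        = ∑ j ∈ range (m+1),
            ((ascPochhammer ℝ j).eval (-(m:ℝ)) * (ascPochhammer ℝ j).eval (E+1))
              / ((j.factorial:ℝ))^2 * (1-x)^j := by
      unfold jacobi0
      refine Finset.sum_congr rfl fun j _ => ?_
      rw [show ((m:ℝ) + (2*(k:ℝ)+1) + 1) = E + 1 from by rw [hcast, hE]; ring,
        show ((1 - (2*x-1))/2 : ℝ) = 1 - x from by ring]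
    rw [h2, ← central m E x, Finset.sum_mul]
    refine Finset.sum_congr rfl fun i hi => ?_
    simp only [mem_range] at hi
    rw [show (k:ℝ) - (n:ℝ) = -(m:ℝ) from by rw [hcast]; ring,
      show -(n:ℝ) - (k:ℝ) - 1 = -E from by rw [hE]; ring,
      show n - i = (m - i) + k from by omega, pow_add]
    ring
  · have e1 : (ascPochhammer ℝ m).eval ((k:ℝ)-(n:ℝ)) = (-1:ℝ)^m * (m.factorial : ℝ) := by
      rw [show (k:ℝ)-(n:ℝ) = -((m:ℕ):ℝ) from by rw [hcast]; ring,
        ascPochhammer_eval_neg_eq_descPochhammer, descPochhammer_eval_eq_descFactorial,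
        Nat.descFactorial_self]
    have e2 : (ascPochhammer ℝ m).eval (-(n:ℝ)-(k:ℝ)-1)
        = (-1:ℝ)^m * (ascPochhammer ℝ m).eval (2*(k:ℝ)+2) := by
      rw [show -(n:ℝ)-(k:ℝ)-1 = -((n:ℝ)+(k:ℝ)+1) from by ring,
        ascPochhammer_eval_neg_eq_descPochhammer, descPochhammer_eval_eq_ascPochhammer,
        show (n:ℝ)+(k:ℝ)+1 - (m:ℝ) + 1 = 2*(k:ℝ)+2 from by rw [hcast]; ring]
    rw [e1, e2]
    have hsq : ((-1:ℝ)^m) * ((-1:ℝ)^m) = 1 := by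
      rw [← pow_add, ← two_mul, pow_mul]; norm_num
    have hf : (m.factorial : ℝ) ≠ 0 := Nat.cast_ne_zero.mpr m.factorial_ne_zero
    rw [show ((-1:ℝ)^m * (m.factorial:ℝ))
          * ((-1:ℝ)^m * (ascPochhammer ℝ m).eval (2*(k:ℝ)+2))
        = ((-1:ℝ)^m * (-1:ℝ)^m)
          * ((m.factorial:ℝ) * (ascPochhammer ℝ m).eval (2*(k:ℝ)+2)) from by ring,
      hsq, one_mul, sq]
    exact mul_div_mul_left _ _ hf
  · have hpos : 0 < (ascPochhammer ℝ m).eval (2*(k:ℝ)+2) :=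
      ascPochhammer_pos m _ (by positivity)
    have hf : 0 < (m.factorial : ℝ) := by exact_mod_cast m.factorial_pos
    exact ne_of_gt (div_pos hpos hf)
end

section
/- For each n ∈ ℕ, the polynomials b_{n,0}^I, b_{n,1}^I, …, b_{n,n}^I (restrictions of the orthogonal triangle polynomials to the edge x₂ = 0) form a basis of the space of univariate polynomials of degree ≤ n. -/
open Polynomial

/-- The edge restriction `b_{n,k}^I` of the orthogonal triangle polynomial, as a
univariate polynomial. -/
noncomputable def bIpoly (n k : ℕ) : ℝ[X] :=
  ∑ i ∈ Finset.range (n - k + 1),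
    C (((ascPochhammer ℝ i).eval ((k : ℝ) - (n : ℝ))
          * (ascPochhammer ℝ i).eval (-(n : ℝ) - (k : ℝ) - 1)) / ((i.factorial : ℝ)) ^ 2)
      * X ^ (n - i) * (X - 1) ^ i

lemma bI_coeff_term (c : ℝ) (a i m : ℕ) :
    (C c * X ^ a * (X - 1) ^ i).coeff m
      = if a ≤ m then c * ((X - 1 : ℝ[X]) ^ i).coeff (m - a) else 0 := by
  rw [mul_assoc, mul_comm (X ^ a), ← mul_assoc, coeff_mul_X_pow']
  split_ifs <;> simp

lemma bI_coeff_lt {n k m : ℕ} (hk : k ≤ n) (hm : m < k) :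
    (bIpoly n k).coeff m = 0 := by
  rw [bIpoly, finset_sum_coeff]
  apply Finset.sum_eq_zero
  intro i hi
  rw [Finset.mem_range] at hi
  rw [bI_coeff_term, if_neg (by omega)]

lemma bI_coeff_diag {n k : ℕ} (hk : k ≤ n) :
    (bIpoly n k).coeff k ≠ 0 := by
  rw [bIpoly, finset_sum_coeff,
    Finset.sum_eq_single (n - k) (fun i hi hne => by
      rw [Finset.mem_range] at hi
      rw [bI_coeff_term, if_neg (by omega)])
     (fun h => absurd (Finset.self_mem_range_succ _) h)]
  rw [bI_coeff_term, if_pos (by omega)]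
  have he : k - (n - (n - k)) = 0 := by omega
  rw [he]
  have hcoeff : ((X - 1 : ℝ[X]) ^ (n - k)).coeff 0 = (-1) ^ (n - k) := by
    rw [coeff_zero_eq_eval_zero]
    simp
  rw [hcoeff]
  have h1 : (ascPochhammer ℝ (n - k)).eval ((k : ℝ) - (n : ℝ)) ≠ 0 := by
    rw [Ne, ascPochhammer_eval_eq_zero_iff]
    push_neg
    intro j hj
    have hj' : (j : ℝ) < ((n - k : ℕ) : ℝ) := by exact_mod_cast hj
    rw [Nat.cast_sub hk] at hj'
    intro h
    rw [h] at hj'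
    linarith
  have h2 : (ascPochhammer ℝ (n - k)).eval (-(n : ℝ) - (k : ℝ) - 1) ≠ 0 := by
    rw [Ne, ascPochhammer_eval_eq_zero_iff]
    push_neg
    intro j hj
    have hj' : (j : ℝ) < ((n - k : ℕ) : ℝ) := by exact_mod_cast hj
    rw [Nat.cast_sub hk] at hj'
    have hk' : (0 : ℝ) ≤ (k : ℝ) := Nat.cast_nonneg k
    intro h
    rw [h] at hj'
    linarith
  have h3 : ((n - k).factorial : ℝ) ^ 2 ≠ 0 := by positivity
  exact mul_ne_zero (div_ne_zero (mul_ne_zero h1 h2) h3) (pow_ne_zero _ (by norm_num))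

lemma bI_mem_degreeLE (n k : ℕ) : bIpoly n k ∈ degreeLE ℝ (n : ℕ) := by
  rw [mem_degreeLE, bIpoly]
  refine (degree_sum_le _ _).trans ?_
  rw [Finset.sup_le_iff]
  intro i hi
  rw [Finset.mem_range] at hi
  refine natDegree_le_iff_degree_le.mp ?_
  have hx1 : (X - 1 : ℝ[X]).natDegree = 1 := by
    simpa using natDegree_X_sub_C (1 : ℝ)
  calc (C _ * X ^ (n - i) * (X - 1 : ℝ[X]) ^ i).natDegree
      ≤ (C _ * X ^ (n - i)).natDegree + ((X - 1 : ℝ[X]) ^ i).natDegree :=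
        natDegree_mul_le
    _ ≤ ((C _ : ℝ[X]).natDegree + (X ^ (n - i) : ℝ[X]).natDegree)
          + ((X - 1 : ℝ[X]) ^ i).natDegree := by
        exact Nat.add_le_add_right natDegree_mul_le _
    _ ≤ n := by
        have := natDegree_pow (X - 1 : ℝ[X]) i
        simp [natDegree_C, natDegree_X_pow, this, hx1]
        omega

theorem bI_basis (n : ℕ) :
    LinearIndependent ℝ (fun k : Fin (n + 1) => bIpoly n k) ∧
    Submodule.span ℝ (Set.range (fun k : Fin (n + 1) => bIpoly n k))
      = Polynomial.degreeLE ℝ (n : ℕ) := by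
  have hli : LinearIndependent ℝ (fun k : Fin (n + 1) => bIpoly n k) := by
    rw [Fintype.linearIndependent_iff]
    intro g hg
    suffices h : ∀ m : ℕ, ∀ hm : m < n + 1, g ⟨m, hm⟩ = 0 by
      intro k; exact h k.1 k.2
    intro m
    induction m using Nat.strong_induction_on with
    | _ m ih =>
      intro hm
      have hc := congrArg (fun p => p.coeff m) hg
      simp only [finset_sum_coeff, coeff_smul, coeff_zero, smul_eq_mul] at hc
      rw [Finset.sum_eq_single (⟨m, hm⟩ : Fin (n + 1))] at hc
      · rcases mul_eq_zero.mp hc with h | h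
        · exact h
        · exact absurd h (bI_coeff_diag (by omega))
      · intro k _ hne
        rcases lt_or_gt_of_ne (fun h : (k : ℕ) = m => hne (Fin.ext h)) with h | h
        · rw [ih k h k.2, zero_mul]
        · rw [bI_coeff_lt (by omega) h, mul_zero]
      · intro h; exact absurd (Finset.mem_univ _) h
  refine ⟨hli, ?_⟩
  -- span
  set V := Polynomial.degreeLE ℝ (n : ℕ)
  have hmem : ∀ k : Fin (n + 1), bIpoly n k ∈ V := fun k => bI_mem_degreeLE n k
  set f : Fin (n + 1) → V := fun k => ⟨bIpoly n k, hmem k⟩ with hf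
  have hlif : LinearIndependent ℝ f := by
    apply LinearIndependent.of_comp V.subtype
    exact hli
  have hfin : Module.Finite ℝ V := by
    rw [show V = degreeLT ℝ (n + 1) from (degreeLT_succ_eq_degreeLE).symm]
    exact Module.Finite.equiv (degreeLTEquiv ℝ (n + 1)).symm
  have hrank : Fintype.card (Fin (n + 1)) = Module.finrank ℝ V := by
    rw [show V = degreeLT ℝ (n + 1) from (degreeLT_succ_eq_degreeLE).symm,
      (degreeLTEquiv ℝ (n + 1)).finrank_eq]
    simp
  have hspan := hlif.span_eq_top_of_card_eq_finrank hrank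
  have := congrArg (Submodule.map V.subtype) hspan
  rw [Submodule.map_span, Submodule.map_top, Submodule.range_subtype] at this
  rw [← this]
  congr 1
  ext p
  simp [f, Set.range_comp]
end
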